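/- Let α be an irrational real number with 0 < α < 1, let k ≥ 1, and let m be an integer with a_{k+1}·q_k < m < q_{k+1}. Suppose m ≠ (a_{k+1} − 1)·q_k + q_{k−1}, and suppose moreover that if a_k = 1 then m ≠ (a_{k+1} − 1)·q_k + 2·q_{k−1}. Then ‖mα‖ ≥ ‖q_{k−1}α‖ + (a_{k+1} + 1)·‖q_kα‖. -/

import Mathlib

open scoped Classical

noncomputable section

namespace SturmianAbelian

/-- Complete quotients: `cq α t = α_t` for `t ≥ 1`; `cq α 0 = α` is a dummy value chosen so that
`cq α 1 = 1/(α - ⌊α⌋) = 1/α` when `0 < α < 1`. -/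
noncomputable def cq (α : ℝ) : ℕ → ℝ
  | 0 => α
  | t + 1 => (cq α t - ⌊cq α t⌋)⁻¹

/-- Partial quotients: `pq α t = a_t = ⌊α_t⌋` for `t ≥ 1`. -/
noncomputable def pq (α : ℝ) (t : ℕ) : ℕ := (⌊cq α t⌋).toNat

/-- Denominators of the convergents of `α`: `qd α k = q_k`, with
`q_0 = 1`, `q_1 = a_1`, `q_k = a_k q_{k-1} + q_{k-2}`. -/
noncomputable def qd (α : ℝ) : ℕ → ℕ
  | 0 => 1
  | 1 => pq α 1
  | (k + 2) => pq α (k + 2) * qd α (k + 1) + qd α k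

/-- Distance from `x` to the nearest integer, `‖x‖`. -/
noncomputable def nint (x : ℝ) : ℝ := min (Int.fract x) (1 - Int.fract x)

/-- The representative of `x` modulo 1 lying in `(0, 1]`. -/
noncomputable def fract' (x : ℝ) : ℝ := 1 - Int.fract (-x)

/-- The Sturmian word of slope `α` and intercept `ρ` in the lower convention:
`s n = 1` iff the fractional part of `ρ + nα` lies in `[1 - α, 1)`. -/
noncomputable def lowerWord (α ρ : ℝ) (n : ℕ) : Bool :=
  if 1 - α ≤ Int.fract (ρ + (n : ℝ) * α) then true else false

/-- The Sturmian word of slope `α` and intercept `ρ` in the upper convention: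
`s n = 1` iff the representative of `ρ + nα` modulo 1 in `(0,1]` lies in `(1 - α, 1]`. -/
noncomputable def upperWord (α ρ : ℝ) (n : ℕ) : Bool :=
  if 1 - α < fract' (ρ + (n : ℝ) * α) then true else false

/-- `s` is a Sturmian word of slope `α` (either convention, some intercept `ρ ∈ [0,1)`). -/
def IsSturmian (α : ℝ) (s : ℕ → Bool) : Prop :=
  ∃ ρ : ℝ, 0 ≤ ρ ∧ ρ < 1 ∧ (s = lowerWord α ρ ∨ s = upperWord α ρ)

/-- `w` is a (finite, contiguous) factor of the infinite word `s`. -/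
def FactorOf (s : ℕ → Bool) (w : List Bool) : Prop :=
  ∃ i : ℕ, w = (List.range w.length).map fun j => s (i + j)

/-- `w` is a factor of slope `α`. -/
def IsFactor (α : ℝ) (w : List Bool) : Prop :=
  ∃ s : ℕ → Bool, IsSturmian α s ∧ FactorOf s w

/-- Abelian equivalence: same length and the same number of occurrences of the letter 1. -/
def AbEq (u v : List Bool) : Prop :=
  u.length = v.length ∧ u.count true = v.count true

/-- `u` is an abelian power of period `m` and exponent `e`: a concatenation of `e ≥ 2` pairwise
abelian equivalent blocks, each of length `m ≥ 1`. -/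
def IsAbelianPower (m e : ℕ) (u : List Bool) : Prop :=
  1 ≤ m ∧ 2 ≤ e ∧ u.length = e * m ∧
  ∀ i < e, ∀ j < e, AbEq ((u.drop (i * m)).take m) ((u.drop (j * m)).take m)

/-- `w` has abelian period `m`: `w` is a contiguous factor of some abelian power of period `m`. -/
def HasAbPeriod (w : List Bool) (m : ℕ) : Prop :=
  ∃ e u, IsAbelianPower m e u ∧ w <:+: u

/-- `m` is the minimum abelian period of `w`. -/
def MinAbPeriod (w : List Bool) (m : ℕ) : Prop :=
  IsLeast {p : ℕ | HasAbPeriod w p} m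

/-- `M(α) = {t·q_k : k ≥ 0, 1 ≤ t ≤ a_{k+1}}`. -/
def Mset (α : ℝ) : Set ℕ :=
  {m | ∃ k t : ℕ, 1 ≤ t ∧ t ≤ pq α (k + 1) ∧ m = t * qd α k}

/-- The set of denominators of convergents and semiconvergents of `α`. -/
def Qsc (α : ℝ) : Set ℕ :=
  {m | (∃ k : ℕ, m = qd α k) ∨
    ∃ k l : ℕ, 1 ≤ k ∧ 1 ≤ l ∧ l < pq α (k + 1) ∧ m = l * qd α k + qd α (k - 1)}

/-- The singular factor of length `q_k`: the unique factor of slope `α` of length `q_k` that is not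
abelian equivalent to any other factor of slope `α` of the same length. -/
def IsSingular (α : ℝ) (k : ℕ) (s : List Bool) : Prop :=
  IsFactor α s ∧ s.length = qd α k ∧
  ∀ u : List Bool, IsFactor α u → u.length = qd α k → u ≠ s → ¬ AbEq u s

/-- `v` occurs in `u` at position `i`. -/
def OccursAt (v u : List Bool) (i : ℕ) : Prop :=
  i + v.length ≤ u.length ∧ (u.drop i).take v.length = v

/-- `u` is a complete first return to `v`: `v` is a prefix and a suffix of `u` and `v` has exactly
two occurrences in `u`. -/
def CompleteFirstReturn (v u : List Bool) : Prop :=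
  v <+: u ∧ v <:+ u ∧ {i | OccursAt v u i}.ncard = 2

/-- `u` is a complete first return to `v` in the same phase. -/
def CFRSamePhase (v u : List Bool) : Prop :=
  v <+: u ∧ v <:+ u ∧ u.length % v.length = 0 ∧
  2 ≤ {i | OccursAt v u i}.ncard ∧
  ∀ i : ℕ, OccursAt v u i → i % v.length = 0 → i = 0 ∨ i = u.length - v.length

/-! ### auxiliary -/

/-- Numerators of the convergents. -/
def pn (α : ℝ) : ℕ → ℕ
  | 0 => 0
  | 1 => 1
  | (k + 2) => pq α (k + 2) * pn α (k + 1) + pn α k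

/-- Signed error `(-1)^j (q_j α - p_j)`. -/
def eta (α : ℝ) (j : ℕ) : ℝ := (-1) ^ j * ((qd α j : ℝ) * α - (pn α j : ℝ))

variable {α : ℝ}

lemma cq_irr_gt (hirr : Irrational α) (h0 : 0 < α) (h1 : α < 1) :
    ∀ j, 1 ≤ j → Irrational (cq α j) ∧ 1 < cq α j := by
  intro j hj
  induction j with
  | zero => omega
  | succ i ih =>
    rcases Nat.eq_or_lt_of_le hj with h | h
    · -- i + 1 = 1, i.e. i = 0
      have hi : i = 0 := by omega
      subst hi
      have hfl : ⌊α⌋ = 0 := Int.floor_eq_zero_iff.mpr ⟨le_of_lt h0, h1⟩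
      have : cq α 1 = α⁻¹ := by simp [cq, hfl]
      rw [this]
      exact ⟨hirr.inv, (one_lt_inv₀ h0).mpr h1⟩
    · have hi : 1 ≤ i := by omega
      obtain ⟨hirr', hgt⟩ := ih hi
      have hfr : Int.fract (cq α i) = cq α i - ⌊cq α i⌋ := rfl
      have hirrf : Irrational (Int.fract (cq α i)) := by
        rw [hfr]; exact hirr'.sub_intCast _
      have hpos : 0 < Int.fract (cq α i) := by
        rcases lt_or_eq_of_le (Int.fract_nonneg (cq α i)) with h' | h'
        · exact h'
        · exact absurd h'.symm hirrf.ne_zero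
      have hlt : Int.fract (cq α i) < 1 := Int.fract_lt_one _
      have : cq α (i + 1) = (Int.fract (cq α i))⁻¹ := by rw [hfr]; rfl
      rw [this]
      exact ⟨hirrf.inv, (one_lt_inv₀ hpos).mpr hlt⟩

lemma pq_cast (hirr : Irrational α) (h0 : 0 < α) (h1 : α < 1) {j : ℕ} (hj : 1 ≤ j) :
    ((pq α j : ℝ)) = (⌊cq α j⌋ : ℝ) ∧ 1 ≤ pq α j := by
  have h := (cq_irr_gt hirr h0 h1 j hj).2
  have hfl : (1 : ℤ) ≤ ⌊cq α j⌋ := Int.le_floor.mpr (by exact_mod_cast h.le)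
  constructor
  · unfold pq
    have h2 : ((⌊cq α j⌋.toNat : ℤ)) = ⌊cq α j⌋ := Int.toNat_of_nonneg (by omega)
    exact_mod_cast congrArg (Int.cast : ℤ → ℝ) h2
  · unfold pq; omega

lemma qd_pos (hirr : Irrational α) (h0 : 0 < α) (h1 : α < 1) :
    ∀ j, 1 ≤ qd α j := by
  intro j
  induction j using Nat.strong_induction_on with
  | _ j ih =>
    match j with
    | 0 => simp [qd]
    | 1 => exact (pq_cast hirr h0 h1 le_rfl).2
    | (i + 2) =>
      have h1' := ih i (by omega)
      have h2' := ih (i+1) (by omega)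
      have h3 := (pq_cast hirr h0 h1 (j := i + 2) (by omega)).2
      simp only [qd]
      nlinarith

lemma eta_succ (j : ℕ) :
    eta α (j + 2) = eta α j - (pq α (j + 2) : ℝ) * eta α (j + 1) := by
  simp only [eta, qd, pn]
  push_cast
  ring

lemma eta_cq (hirr : Irrational α) (h0 : 0 < α) (h1 : α < 1) :
    ∀ i, eta α i = cq α (i + 2) * eta α (i + 1) := by
  intro i
  induction i with
  | zero =>
    have hfl : ⌊α⌋ = 0 := Int.floor_eq_zero_iff.mpr ⟨le_of_lt h0, h1⟩
    have hcq1 : cq α 1 = α⁻¹ := by simp [cq, hfl]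
    have hpq : ((pq α 1 : ℝ)) = (⌊cq α 1⌋ : ℝ) := (pq_cast hirr h0 h1 le_rfl).1
    have hcq2 : cq α 2 = (α⁻¹ - (pq α 1 : ℝ))⁻¹ := by
      show (cq α 1 - (⌊cq α 1⌋:ℝ))⁻¹ = _
      rw [← hpq, hcq1]
    have he0 : eta α 0 = α := by simp [eta, qd, pn]
    have he1 : eta α 1 = 1 - (pq α 1 : ℝ) * α := by
      simp only [eta, qd, pn]; push_cast; ring
    have hne : (1 : ℝ) - (pq α 1 : ℝ) * α ≠ 0 := by
      intro h
      have hq1 : 1 ≤ pq α 1 := (pq_cast hirr h0 h1 le_rfl).2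
      have hq1R : (1:ℝ) ≤ (pq α 1 : ℝ) := by exact_mod_cast hq1
      apply hirr
      refine ⟨(pq α 1 : ℚ)⁻¹, ?_⟩
      push_cast
      have hq0 : (pq α 1 : ℝ) ≠ 0 := by linarith
      field_simp
      linarith
    rw [he0, he1, hcq2]
    have hαne : α ≠ 0 := ne_of_gt h0
    have hkey : α⁻¹ - (pq α 1 : ℝ) = (1 - (pq α 1 : ℝ) * α) / α := by field_simp
    rw [hkey]
    rw [inv_div]
    rw [div_mul_cancel₀ _ hne]
    try ring
  | succ i ih =>
    have hj : 1 ≤ i + 2 := by omega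
    obtain ⟨hirr', hgt⟩ := cq_irr_gt hirr h0 h1 (i + 2) hj
    have hpq : ((pq α (i+2) : ℝ)) = (⌊cq α (i+2)⌋ : ℝ) := (pq_cast hirr h0 h1 hj).1
    have hcq : cq α (i + 3) = (cq α (i+2) - (pq α (i+2) : ℝ))⁻¹ := by
      show (cq α (i+2) - (⌊cq α (i+2)⌋:ℝ))⁻¹ = _
      rw [← hpq]
    have hne : cq α (i+2) - (pq α (i+2) : ℝ) ≠ 0 := by
      rw [hpq]
      exact sub_ne_zero.mpr (hirr'.ne_int _)
    have h2 : eta α (i + 2) = (cq α (i+2) - (pq α (i+2):ℝ)) * eta α (i + 1) := by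
      rw [eta_succ i, ih]; ring
    rw [hcq, h2, ← mul_assoc, inv_mul_cancel₀ hne, one_mul]

lemma eta_pos (hirr : Irrational α) (h0 : 0 < α) (h1 : α < 1) :
    ∀ j, 0 < eta α j := by
  intro j
  induction j with
  | zero => simpa [eta, qd, pn] using h0
  | succ i ih =>
    have h := eta_cq hirr h0 h1 i
    have hgt := (cq_irr_gt hirr h0 h1 (i + 2) (by omega)).2
    nlinarith

lemma eta_lt (hirr : Irrational α) (h0 : 0 < α) (h1 : α < 1) (i : ℕ) :
    eta α (i + 1) < eta α i := by
  have h := eta_cq hirr h0 h1 i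
  have hgt := (cq_irr_gt hirr h0 h1 (i + 2) (by omega)).2
  have hp := eta_pos hirr h0 h1 (i + 1)
  nlinarith

lemma eta_lt_half (hirr : Irrational α) (h0 : 0 < α) (h1 : α < 1) {j : ℕ} (hj : 1 ≤ j) :
    eta α j < 1 / 2 := by
  have h1' : eta α 1 < 1 / 2 := by
    have he1 : eta α 1 = 1 - (pq α 1 : ℝ) * α := by
      simp only [eta, qd, pn]; push_cast; ring
    have hq1 : 1 ≤ pq α 1 := (pq_cast hirr h0 h1 le_rfl).2
    have hlt : eta α 1 < eta α 0 := eta_lt hirr h0 h1 0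
    have he0 : eta α 0 = α := by simp [eta, qd, pn]
    have : (1:ℝ) ≤ (pq α 1 : ℝ) := by exact_mod_cast hq1
    nlinarith [eta_pos hirr h0 h1 1]
  have : ∀ i, 1 ≤ i → eta α i ≤ eta α 1 := by
    intro i hi
    induction i with
    | zero => omega
    | succ n ih =>
      rcases Nat.eq_or_lt_of_le hi with h | h
      · simp [← h]
      · have := ih (by omega)
        have := eta_lt hirr h0 h1 n
        linarith
  linarith [this j hj]

lemma det_eq (α : ℝ) : ∀ j, (pn α (j+1) : ℤ) * (qd α j : ℤ) - (pn α j : ℤ) * (qd α (j+1) : ℤ) = (-1) ^ j := by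
  intro j
  induction j with
  | zero => simp [pn, qd]
  | succ i ih =>
    have e1 : (pn α (i+2) : ℤ) = (pq α (i+2) : ℤ) * (pn α (i+1) : ℤ) + (pn α i : ℤ) := by
      push_cast [pn]
      try ring
    have e2 : (qd α (i+2) : ℤ) = (pq α (i+2) : ℤ) * (qd α (i+1) : ℤ) + (qd α i : ℤ) := by
      push_cast [qd]
      try ring
    rw [e1, e2, pow_succ]
    linear_combination (-1 : ℤ) * ih

lemma nint_lower {x c : ℝ} (h : ∀ n : ℤ, c ≤ |x - n|) : c ≤ nint x := by
  have h1 := h ⌊x⌋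
  have h2 := h (⌊x⌋ + 1)
  have hf : Int.fract x = x - ⌊x⌋ := rfl
  have hf0 : 0 ≤ Int.fract x := Int.fract_nonneg x
  have hf1 : Int.fract x < 1 := Int.fract_lt_one x
  rw [abs_of_nonneg (by rw [← hf]; exact hf0)] at h1
  rw [abs_of_nonpos (by push_cast; rw [← sub_sub, ← hf]; linarith)] at h2
  unfold nint
  rw [le_min_iff]
  constructor
  · rw [hf]; exact h1
  · rw [hf]; push_cast at h2 ⊢; linarith

lemma nint_eq_abs {x : ℝ} {n : ℤ} (h : |x - n| ≤ 1 / 2) : nint x = |x - n| := by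
  have hfr : Int.fract x = Int.fract (x - n) := (Int.fract_sub_intCast x n).symm
  rcases le_or_gt 0 (x - n) with hs | hs
  · have habs : |x - n| = x - n := abs_of_nonneg hs
    have hfx : Int.fract (x - n) = x - n := Int.fract_eq_self.mpr ⟨hs, by rw [habs] at h; linarith⟩
    unfold nint
    rw [hfr, hfx, habs, min_eq_left]
    rw [habs] at h; linarith
  · have habs : |x - n| = -(x - n) := abs_of_neg hs
    rw [habs] at h
    have hfl : ⌊x - n⌋ = -1 := by
      apply Int.floor_eq_iff.mpr
      constructor
      · push_cast; linarith
      · push_cast; linarith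
    have hfx : Int.fract (x - n) = x - n + 1 := by
      unfold Int.fract; rw [hfl]; push_cast; ring
    unfold nint
    rw [hfr, hfx, min_eq_right, habs]
    · ring
    · linarith

lemma nint_qd (hirr : Irrational α) (h0 : 0 < α) (h1 : α < 1) {j : ℕ} (hj : 1 ≤ j) :
    nint ((qd α j : ℝ) * α) = eta α j := by
  have hpos := eta_pos hirr h0 h1 j
  have hhalf := eta_lt_half hirr h0 h1 hj
  have key : |(qd α j : ℝ) * α - (pn α j : ℤ)| = eta α j := by
    have : (qd α j : ℝ) * α - (pn α j : ℤ) = (-1) ^ j * eta α j := by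
      unfold eta
      rcases Nat.even_or_odd j with he | he
      · rw [he.neg_one_pow]; push_cast; ring
      · rw [he.neg_one_pow]; push_cast; ring
    rw [this, abs_mul, abs_pow, abs_neg, abs_one, one_pow, one_mul, abs_of_pos hpos]
  rw [nint_eq_abs (by rw [key]; linarith), key]


lemma key_ineq (A B Q0 Q1 u v : ℤ) (E0 E1 E2 E3 : ℝ)
    (hQ0p : 1 ≤ Q0) (hQ01 : Q0 < Q1) (hAp : 1 ≤ A) (hBp : 1 ≤ B)
    (hE0 : 0 < E0) (hE1 : 0 < E1) (hE2 : 0 < E2) (hE3 : 0 < E3)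
    (hrec1 : E2 = E0 - (B : ℝ) * E1) (hrec2 : E3 = E1 - (A : ℝ) * E2)
    (hr1 : 1 ≤ u * Q1 + v * Q0) (hr2 : u * Q1 + v * Q0 ≤ Q1 - 1)
    (hexc : ¬(u = 1 ∧ v = -1 ∧ B = 1)) :
    E1 + ((A : ℝ) + 1) * E2 ≤ |(A : ℝ) * E2 - (u : ℝ) * E1 + (v : ℝ) * E0| := by
  have hAR : (1 : ℝ) ≤ (A : ℝ) := by exact_mod_cast hAp
  have hBR : (1 : ℝ) ≤ (B : ℝ) := by exact_mod_cast hBp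
  rcases le_or_gt v 0 with hv | hv <;> rcases le_or_gt u 0 with hu | hu
  · -- v ≤ 0, u ≤ 0 : impossible
    exfalso
    have h1' : u * Q1 ≤ 0 := mul_nonpos_iff.mpr (Or.inr ⟨hu, by omega⟩)
    have h2' : v * Q0 ≤ 0 := mul_nonpos_iff.mpr (Or.inr ⟨hv, by omega⟩)
    linarith
  · -- v ≤ 0, u ≥ 1 : main case
    have hu1 : 1 ≤ u := hu
    have hv1 : v ≤ -1 := by
      by_contra hcon
      have hv0 : v = 0 := by omega
      rw [hv0] at hr2
      have : Q1 ≤ u * Q1 := le_mul_of_one_le_left (by omega) hu1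
      linarith
    rcases le_or_gt (u + (-v) * B) 2 with hsmall | hbig
    · -- forces u = 1, v = -1, B = 1, excluded
      exfalso
      apply hexc
      have hwB : 1 ≤ (-v) * B := by
        have := mul_le_mul (by omega : (1 : ℤ) ≤ -v) (by omega : (1 : ℤ) ≤ B)
          (by omega) (by omega)
        linarith
      have hu_eq : u = 1 := by linarith
      have hwB1 : (-v) * B = 1 := by linarith
      have hv_le : -v ≤ 1 := by nlinarith
      have hB_le : B ≤ 1 := by nlinarith
      exact ⟨hu_eq, by omega, by omega⟩
    · have huR : (1 : ℝ) ≤ (u : ℝ) := by exact_mod_cast hu1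
      have hwR : (1 : ℝ) ≤ (-(v : ℝ)) := by
        have : (1 : ℝ) ≤ ((-v : ℤ) : ℝ) := by exact_mod_cast (by omega : 1 ≤ -v)
        push_cast at this; linarith
      have hbigR : (3 : ℝ) ≤ (u : ℝ) + (-(v : ℝ)) * (B : ℝ) := by
        have : ((3 : ℤ) : ℝ) ≤ ((u + (-v) * B : ℤ) : ℝ) := by exact_mod_cast hbig
        push_cast at this; linarith
      have t1 : 0 ≤ ((u : ℝ) + (-(v : ℝ)) * (B : ℝ) - 3) * E1 :=
        mul_nonneg (by linarith) hE1.le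
      have t2 : 0 ≤ ((-(v : ℝ)) - 1) * E2 := mul_nonneg (by linarith) hE2.le
      have hXle : E1 + ((A : ℝ) + 1) * E2 ≤ -((A : ℝ) * E2 - (u : ℝ) * E1 + (v : ℝ) * E0) := by
        nlinarith
      exact le_trans hXle (neg_le_abs _)
  · -- v ≥ 1, u ≤ 0
    have hvR : (1 : ℝ) ≤ (v : ℝ) := by exact_mod_cast hv
    have huR : (u : ℝ) ≤ 0 := by exact_mod_cast hu
    have t1 : 0 ≤ (-(u : ℝ)) * E1 := mul_nonneg (by linarith) hE1.le
    have t2 : 0 ≤ ((v : ℝ) - 1) * E0 := mul_nonneg (by linarith) hE0.le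
    have t3 : 0 ≤ ((B : ℝ) - 1) * E1 := mul_nonneg (by linarith) hE1.le
    have hXge : E1 + ((A : ℝ) + 1) * E2 ≤ (A : ℝ) * E2 - (u : ℝ) * E1 + (v : ℝ) * E0 := by
      nlinarith
    exact le_trans hXge (le_abs_self _)
  · -- v ≥ 1, u ≥ 1 : impossible
    exfalso
    have h1' : Q1 ≤ u * Q1 := le_mul_of_one_le_left (by omega) hu
    have h2' : Q0 ≤ v * Q0 := le_mul_of_one_le_left (by omega) hv
    linarith

theorem larger_lower_bound
    (α : ℝ) (hirr : Irrational α) (h0 : 0 < α) (h1 : α < 1)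
    (k : ℕ) (hk : 1 ≤ k) (m : ℕ)
    (hlo : pq α (k + 1) * qd α k < m) (hhi : m < qd α (k + 1))
    (hne1 : m ≠ (pq α (k + 1) - 1) * qd α k + qd α (k - 1))
    (hne2 : pq α k = 1 → m ≠ (pq α (k + 1) - 1) * qd α k + 2 * qd α (k - 1)) :
    nint ((qd α (k - 1) : ℝ) * α) + ((pq α (k + 1) : ℝ) + 1) * nint ((qd α k : ℝ) * α)
      ≤ nint ((m : ℝ) * α) := by
  clear hne1
  obtain ⟨n, rfl⟩ : ∃ n, k = n + 2 := by
    rcases k with _ | k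
    · omega
    rcases k with _ | k
    · exfalso
      have h2 : qd α 2 = pq α 2 * qd α 1 + qd α 0 := rfl
      have h01 : qd α 0 = 1 := rfl
      norm_num at hlo hhi
      omega
    · exact ⟨k, rfl⟩
  rw [show n + 2 - 1 = n + 1 from rfl, show n + 2 + 1 = n + 3 from rfl] at hne2
  rw [show n + 2 + 1 = n + 3 from rfl] at hlo hhi
  rw [show n + 2 - 1 = n + 1 from rfl, show n + 2 + 1 = n + 3 from rfl]
  rw [nint_qd hirr h0 h1 (j := n + 1) (by omega),
      nint_qd hirr h0 h1 (j := n + 2) (by omega)]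
  have hq3 : qd α (n + 3) = pq α (n + 3) * qd α (n + 2) + qd α (n + 1) := rfl
  have hq2 : qd α (n + 2) = pq α (n + 2) * qd α (n + 1) + qd α n := rfl
  have hAn : 1 ≤ pq α (n + 3) := (pq_cast hirr h0 h1 (by omega)).2
  have hBn : 1 ≤ pq α (n + 2) := (pq_cast hirr h0 h1 (by omega)).2
  have hq0n : 1 ≤ qd α n := qd_pos hirr h0 h1 n
  have hq1n : 1 ≤ qd α (n + 1) := qd_pos hirr h0 h1 (n + 1)
  have hq01 : qd α n < qd α (n + 1) := by
    rcases n with _ | i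
    · have h00 : qd α (0 : ℕ) = 1 := rfl
      omega
    · have hrec : qd α (i + 1 + 1) = pq α (i + 1 + 1) * qd α (i + 1) + qd α i := rfl
      have h1' := qd_pos hirr h0 h1 i
      have h2' := qd_pos hirr h0 h1 (i + 1)
      have h3' := (pq_cast hirr h0 h1 (j := i + 1 + 1) (by omega)).2
      nlinarith
  apply nint_lower
  intro N
  obtain ⟨ε, hε_def⟩ : ∃ e : ℤ, e = (-1) ^ n := ⟨_, rfl⟩
  have hε : ε * ε = 1 := by rw [hε_def, ← mul_pow]; norm_num
  have hdet : (pn α (n + 1) : ℤ) * (qd α n : ℤ) - (pn α n : ℤ) * (qd α (n + 1) : ℤ) = ε := by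
    rw [hε_def]; exact det_eq α n
  obtain ⟨r, hr_def⟩ : ∃ r : ℤ, r = (m : ℤ) - (pq α (n + 3) : ℤ) * (qd α (n + 2) : ℤ) := ⟨_, rfl⟩
  obtain ⟨N', hN'_def⟩ : ∃ x : ℤ, x = N - (pq α (n + 3) : ℤ) * (pn α (n + 2) : ℤ) := ⟨_, rfl⟩
  obtain ⟨u, hu_def⟩ : ∃ u : ℤ,
      u = -ε * (r * (pn α n : ℤ) - N' * (qd α n : ℤ)) := ⟨_, rfl⟩
  obtain ⟨v, hv_def⟩ : ∃ v : ℤ,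
      v = -ε * ((qd α (n + 1) : ℤ) * N' - (pn α (n + 1) : ℤ) * r) := ⟨_, rfl⟩
  have huv1 : u * (qd α (n + 1) : ℤ) + v * (qd α n : ℤ) = r := by
    rw [hu_def, hv_def]; linear_combination (ε * r) * hdet + r * hε
  have huv2 : u * (pn α (n + 1) : ℤ) + v * (pn α n : ℤ) = N' := by
    rw [hu_def, hv_def]; linear_combination (ε * N') * hdet + N' * hε
  have hloZ : (pq α (n + 3) : ℤ) * (qd α (n + 2) : ℤ) < (m : ℤ) := by exact_mod_cast hlo
  have hhiZ : (m : ℤ) < (pq α (n + 3) : ℤ) * (qd α (n + 2) : ℤ) + (qd α (n + 1) : ℤ) := by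
    have : (m : ℤ) < ((qd α (n + 3) : ℕ) : ℤ) := by exact_mod_cast hhi
    rw [hq3] at this; push_cast at this; linarith
  have hr1 : 1 ≤ r := by rw [hr_def]; linarith
  have hr2 : r ≤ (qd α (n + 1) : ℤ) - 1 := by rw [hr_def]; linarith
  have hrr1 : 1 ≤ u * (qd α (n + 1) : ℤ) + v * (qd α n : ℤ) := by rw [huv1]; exact hr1
  have hrr2 : u * (qd α (n + 1) : ℤ) + v * (qd α n : ℤ) ≤ (qd α (n + 1) : ℤ) - 1 := by
    rw [huv1]; exact hr2
  -- real decomposition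
  have hsq : ((-1 : ℝ) ^ n) * ((-1 : ℝ) ^ n) = 1 := by rw [← mul_pow]; norm_num
  have e0 : (-1 : ℝ) ^ n * eta α n = (qd α n : ℝ) * α - (pn α n : ℝ) := by
    unfold eta
    linear_combination ((qd α n : ℝ) * α - (pn α n : ℝ)) * hsq
  have e1 : (-1 : ℝ) ^ n * eta α (n + 1) = -((qd α (n + 1) : ℝ) * α - (pn α (n + 1) : ℝ)) := by
    unfold eta
    rw [pow_succ]
    linear_combination (-((qd α (n + 1) : ℝ) * α - (pn α (n + 1) : ℝ))) * hsq
  have e2 : (-1 : ℝ) ^ n * eta α (n + 2) = (qd α (n + 2) : ℝ) * α - (pn α (n + 2) : ℝ) := by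
    unfold eta
    rw [show n + 2 = (n + 1) + 1 from rfl, pow_succ, pow_succ]
    linear_combination ((qd α (n + 2) : ℝ) * α - (pn α (n + 2) : ℝ)) * hsq
  have hmZ : (m : ℤ) = (pq α (n + 3) : ℤ) * (qd α (n + 2) : ℤ) + u * (qd α (n + 1) : ℤ)
      + v * (qd α n : ℤ) := by linarith [huv1, hr_def]
  have hNZ : (N : ℤ) = (pq α (n + 3) : ℤ) * (pn α (n + 2) : ℤ) + u * (pn α (n + 1) : ℤ)
      + v * (pn α n : ℤ) := by linarith [huv2, hN'_def]
  have hmR : (m : ℝ) = (pq α (n + 3) : ℝ) * (qd α (n + 2) : ℝ) + (u : ℝ) * (qd α (n + 1) : ℝ)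
      + (v : ℝ) * (qd α n : ℝ) := by exact_mod_cast hmZ
  have hNR : (N : ℝ) = (pq α (n + 3) : ℝ) * (pn α (n + 2) : ℝ) + (u : ℝ) * (pn α (n + 1) : ℝ)
      + (v : ℝ) * (pn α n : ℝ) := by exact_mod_cast hNZ
  have key : (m : ℝ) * α - N = (-1 : ℝ) ^ n *
      ((pq α (n + 3) : ℝ) * eta α (n + 2) - (u : ℝ) * eta α (n + 1) + (v : ℝ) * eta α n) := by
    rw [hmR, hNR]
    linear_combination (-((pq α (n + 3) : ℕ) : ℝ)) * e2 + (u : ℝ) * e1 + (-(v : ℝ)) * e0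
  have habs : |(m : ℝ) * α - (N : ℝ)| =
      |(pq α (n + 3) : ℝ) * eta α (n + 2) - (u : ℝ) * eta α (n + 1) + (v : ℝ) * eta α n| := by
    rw [key, abs_mul, abs_pow, abs_neg, abs_one, one_pow, one_mul]
  rw [habs]
  have hexc : ¬(u = 1 ∧ v = -1 ∧ (pq α (n + 2) : ℤ) = 1) := by
    rintro ⟨hu1, hv1, hB1⟩
    have hBnat : pq α (n + 2) = 1 := by exact_mod_cast hB1
    apply hne2 hBnat
    rw [hu1, hv1] at huv1
    have hq2Z : (qd α (n + 2) : ℤ) = (qd α (n + 1) : ℤ) + (qd α n : ℤ) := by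
      rw [hq2, hBnat]; push_cast; ring
    zify [hAn]
    have : ((m : ℕ) : ℤ) = (pq α (n + 3) : ℤ) * (qd α (n + 2) : ℤ) + (qd α (n + 1) : ℤ)
        - (qd α n : ℤ) := by linarith
    rw [this]
    linarith [hq2Z]
  have H := key_ineq (pq α (n + 3) : ℤ) (pq α (n + 2) : ℤ) (qd α n : ℤ) (qd α (n + 1) : ℤ)
    u v (eta α n) (eta α (n + 1)) (eta α (n + 2)) (eta α (n + 3))
    (by exact_mod_cast hq0n) (by exact_mod_cast hq01)
    (by exact_mod_cast hAn) (by exact_mod_cast hBn)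
    (eta_pos hirr h0 h1 n) (eta_pos hirr h0 h1 (n + 1))
    (eta_pos hirr h0 h1 (n + 2)) (eta_pos hirr h0 h1 (n + 3))
    (by push_cast; exact eta_succ n) (by push_cast; exact eta_succ (n + 1))
    hrr1 hrr2 hexc
  push_cast at H ⊢
  linarith [H]

end SturmianAbelian
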